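/- Let B : Fin m → Fin n → ℤ be such that each row j ↦ B k j is non-increasing, and let D ≥ 0 be an integer with (Σ_k B k j) − (Σ_k B k (j+1)) ≤ D for every j with j+1 < n. Let Δ, W ≥ 1 be integers with Δ dividing n. Then there exists B̂ : Fin m → Fin n → ℤ such that: (i) |B̂ k j1 − B̂ k j2| ≤ W whenever j1 and j2 lie in the same window of Δ consecutive columns (i.e. ⌊j1/Δ⌋ = ⌊j2/Δ⌋); and (ii) the number of pairs (k, j) with B̂ k j ≠ B k j is at most m' where m' = n · Δ · D / W. -/

import Mathlib

theorem stmt12 (m n : ℕ) (B : Fin m → Fin n → ℤ)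
    (hrow : ∀ k, Antitone (B k))
    (D : ℤ) (hD : 0 ≤ D)
    (hcol : ∀ j : Fin n, ∀ h : (j : ℕ) + 1 < n,
      (∑ k, B k j) - (∑ k, B k ⟨(j : ℕ) + 1, h⟩) ≤ D)
    (Δ W : ℕ) (hΔ : 1 ≤ Δ) (hW : 1 ≤ W) (hdvd : Δ ∣ n) :
    ∃ Bhat : Fin m → Fin n → ℤ,
      (∀ (k : Fin m) (j1 j2 : Fin n), (j1 : ℕ) / Δ = (j2 : ℕ) / Δ →
        |Bhat k j1 - Bhat k j2| ≤ (W : ℤ)) ∧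
      ((Finset.univ.filter
          (fun q : Fin m × Fin n => Bhat q.1 q.2 ≠ B q.1 q.2)).card : ℤ)
        ≤ (n : ℤ) * (Δ : ℤ) * D / (W : ℤ) := by
  classical
  have hΔ0 : 0 < Δ := hΔ
  have hsn : ∀ j : Fin n, (j : ℕ) / Δ * Δ < n := fun j =>
    lt_of_le_of_lt (Nat.div_mul_le_self _ _) j.2
  have hen : ∀ j : Fin n, (j : ℕ) / Δ * Δ + (Δ - 1) < n := by
    intro j
    have h1 : (j : ℕ) / Δ < n / Δ := Nat.div_lt_div_of_lt_of_dvd hdvd j.2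
    have h2 : ((j : ℕ) / Δ + 1) * Δ ≤ n / Δ * Δ := Nat.mul_le_mul_right _ h1
    rw [add_mul, one_mul] at h2
    have h3 : n / Δ * Δ = n := Nat.div_mul_cancel hdvd
    omega
  set s : Fin n → Fin n := fun j => ⟨(j : ℕ) / Δ * Δ, hsn j⟩ with hs
  set e : Fin n → Fin n := fun j => ⟨(j : ℕ) / Δ * Δ + (Δ - 1), hen j⟩ with he
  have hsle : ∀ j : Fin n, s j ≤ j := fun j => Nat.div_mul_le_self _ _
  have hle_e : ∀ j : Fin n, j ≤ e j := by
    intro j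
    have h1 := Nat.div_add_mod (j : ℕ) Δ
    rw [Nat.mul_comm] at h1
    have h2 : (j : ℕ) % Δ < Δ := Nat.mod_lt _ hΔ0
    show (j : ℕ) ≤ (j : ℕ) / Δ * Δ + (Δ - 1)
    omega
  set Bhat : Fin m → Fin n → ℤ :=
    fun k j => if (W : ℤ) < B k (s j) - B k (e j) then 0 else B k j with hBhat
  have hval : ∀ k j, Bhat k j = if (W : ℤ) < B k (s j) - B k (e j) then 0 else B k j :=
    fun _ _ => rfl
  refine ⟨Bhat, ?_, ?_⟩
  · intro k j1 j2 hw
    have hseq : s j1 = s j2 := by simp [hs, hw]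
    have heeq : e j1 = e j2 := by simp [he, hw]
    rw [hval, hval]
    by_cases hb : (W : ℤ) < B k (s j1) - B k (e j1)
    · rw [if_pos hb, if_pos (by rwa [← hseq, ← heeq])]
      simp
    · rw [if_neg hb, if_neg (by rwa [← hseq, ← heeq])]
      push_neg at hb
      have h1 : B k (e j1) ≤ B k j1 := hrow k (hle_e j1)
      have h2 : B k j1 ≤ B k (s j1) := hrow k (hsle j1)
      have h3 : B k (e j1) ≤ B k j2 := by
        rw [heeq]; exact hrow k (hle_e j2)
      have h4 : B k j2 ≤ B k (s j1) := by
        rw [hseq]; exact hrow k (hsle j2)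
      rw [abs_le]
      constructor <;> linarith
  · -- counting part
    have tele : ∀ (t : ℕ) (a : Fin n) (h : (a : ℕ) + t < n),
        (∑ k, B k a) - (∑ k, B k ⟨(a : ℕ) + t, h⟩) ≤ (t : ℤ) * D := by
      intro t
      induction t with
      | zero =>
        intro a h
        have : (⟨(a : ℕ) + 0, h⟩ : Fin n) = a := by ext; simp
        rw [this]; simp
      | succ t ih =>
        intro a h
        have h' : (a : ℕ) + t < n := by omega
        have h1 := ih a h'
        have h2 := hcol ⟨(a : ℕ) + t, h'⟩ (by omega)
        have h3 : (⟨((⟨(a : ℕ) + t, h'⟩ : Fin n) : ℕ) + 1, by omega⟩ : Fin n)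
            = ⟨(a : ℕ) + (t + 1), h⟩ := by ext; simp; omega
        rw [h3] at h2
        push_cast
        linarith
    have colbound : ∀ j : Fin n,
        (W : ℤ) * ((Finset.univ.filter
          (fun k : Fin m => (W : ℤ) < B k (s j) - B k (e j))).card) ≤ (Δ : ℤ) * D := by
      intro j
      set F := Finset.univ.filter
          (fun k : Fin m => (W : ℤ) < B k (s j) - B k (e j)) with hF
      have h1 : (F.card : ℤ) * (W : ℤ) ≤ ∑ k ∈ F, (B k (s j) - B k (e j)) := by
        rw [← nsmul_eq_mul]
        apply Finset.card_nsmul_le_sum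
        intro k hk
        have := (Finset.mem_filter.mp hk).2
        linarith
      have h2 : ∑ k ∈ F, (B k (s j) - B k (e j)) ≤ ∑ k, (B k (s j) - B k (e j)) := by
        apply Finset.sum_le_sum_of_subset_of_nonneg (Finset.filter_subset _ _)
        intro k _ _
        have : B k (e j) ≤ B k (s j) := hrow k (le_trans (hsle j) (hle_e j))
        linarith
      have h3 : ∑ k, (B k (s j) - B k (e j))
          = (∑ k, B k (s j)) - ∑ k, B k (e j) := Finset.sum_sub_distrib _ _
      have h4 := tele (Δ - 1) (s j) (hen j)
      have h5 : (⟨((s j : Fin n) : ℕ) + (Δ - 1), hen j⟩ : Fin n) = e j := rfl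
      rw [h5] at h4
      have h6 : (((Δ - 1 : ℕ) : ℤ)) * D ≤ (Δ : ℤ) * D := by
        apply mul_le_mul_of_nonneg_right _ hD
        exact_mod_cast Nat.sub_le Δ 1
      linarith
    have hsub : (Finset.univ.filter
          (fun q : Fin m × Fin n => Bhat q.1 q.2 ≠ B q.1 q.2))
        ⊆ (Finset.univ.filter
          (fun q : Fin m × Fin n => (W : ℤ) < B q.1 (s q.2) - B q.1 (e q.2))) := by
      intro q hq
      simp only [Finset.mem_filter, Finset.mem_univ, true_and] at hq ⊢
      by_contra hb
      exact hq ((hval q.1 q.2).trans (if_neg hb))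
    set Bad := (Finset.univ.filter
        (fun q : Fin m × Fin n => (W : ℤ) < B q.1 (s q.2) - B q.1 (e q.2))) with hBad
    have hcard : Bad.card = ∑ j : Fin n, (Bad.filter (fun q => q.2 = j)).card :=
      Finset.card_eq_sum_card_fiberwise (fun x _ => Finset.mem_univ x.2)
    have hfib : ∀ j : Fin n, (Bad.filter (fun q => q.2 = j)).card
        ≤ (Finset.univ.filter
          (fun k : Fin m => (W : ℤ) < B k (s j) - B k (e j))).card := by
      intro j
      apply Finset.card_le_card_of_injOn (fun q => q.1)
      · intro q hq
        simp only [hBad, Finset.mem_coe, Finset.mem_filter, Finset.mem_univ, true_and] at hq ⊢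
        rw [← hq.2]; exact hq.1
      · intro q1 h1 q2 h2 hfst
        simp only [hBad, Finset.mem_coe, Finset.mem_filter] at h1 h2
        exact Prod.ext hfst (h1.2.trans h2.2.symm)
    have key : (Bad.card : ℤ) * (W : ℤ) ≤ (n : ℤ) * (Δ : ℤ) * D := by
      calc (Bad.card : ℤ) * (W : ℤ)
          = ∑ j : Fin n, ((Bad.filter (fun q => q.2 = j)).card : ℤ) * (W : ℤ) := by
            rw [hcard]; push_cast; rw [Finset.sum_mul]
        _ ≤ ∑ j : Fin n, (Δ : ℤ) * D := by
            apply Finset.sum_le_sum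
            intro j _
            have h1 := hfib j
            have h2 := colbound j
            have h3 : ((Bad.filter (fun q => q.2 = j)).card : ℤ) * (W : ℤ)
                ≤ ((Finset.univ.filter
                  (fun k : Fin m => (W : ℤ) < B k (s j) - B k (e j))).card : ℤ)
                  * (W : ℤ) := by
              apply mul_le_mul_of_nonneg_right _ (by positivity)
              exact_mod_cast h1
            linarith
        _ = (n : ℤ) * (Δ : ℤ) * D := by
            simp [Finset.sum_const, Finset.card_univ]
            ring
    have hWp : (0 : ℤ) < (W : ℤ) := by exact_mod_cast hW
    rw [Int.le_ediv_iff_mul_le hWp]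
    calc ((Finset.univ.filter
          (fun q : Fin m × Fin n => Bhat q.1 q.2 ≠ B q.1 q.2)).card : ℤ) * (W : ℤ)
        ≤ (Bad.card : ℤ) * (W : ℤ) := by
          apply mul_le_mul_of_nonneg_right _ (le_of_lt hWp)
          exact_mod_cast Finset.card_le_card hsub
      _ ≤ (n : ℤ) * (Δ : ℤ) * D := key
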